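/- Let X₁, …, X_ℓ (ℓ ∈ ℕ₊) be AIMD matrices such that at least one X_g equals the full back-off matrix B = β·I + ((1−β)/n)·e·eᵀ. Then the product X_ℓ ⋯ X₂ X₁ is a column stochastic matrix with all entries strictly positive. -/

import Mathlib

/-- `A` is an AIMD matrix: `A = diag(β̃) + (1/n)·e·(eᵀ − β̃ᵀ)` where each `β̃ᵢ ∈ {β, 1}`. -/
def IsAIMD (n : ℕ) (β : ℝ) (A : Matrix (Fin n) (Fin n) ℝ) : Prop :=
  ∃ b : Fin n → ℝ, (∀ i, b i = β ∨ b i = 1) ∧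
    A = Matrix.diagonal b + (1 / (n : ℝ)) • Matrix.of (fun _ j => 1 - b j)

/-- The full back-off AIMD matrix `B = β·I + ((1−β)/n)·e·eᵀ`. -/
noncomputable def Bmat (n : ℕ) (β : ℝ) : Matrix (Fin n) (Fin n) ℝ :=
  β • (1 : Matrix (Fin n) (Fin n) ℝ) + ((1 - β) / (n : ℝ)) • Matrix.of (fun _ _ => (1 : ℝ))

def GoodM (n : ℕ) (M : Matrix (Fin n) (Fin n) ℝ) : Prop :=
  (∀ i j, 0 ≤ M i j) ∧ (∀ i, 0 < M i i) ∧ (∀ j, ∑ i, M i j = 1)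

def PosM (n : ℕ) (M : Matrix (Fin n) (Fin n) ℝ) : Prop :=
  (∀ i j, 0 < M i j) ∧ (∀ j, ∑ i, M i j = 1)

lemma good_one (n : ℕ) : GoodM n 1 := by
  refine ⟨fun i j => ?_, fun i => ?_, fun j => ?_⟩
  · simp [Matrix.one_apply]; positivity
  · simp [Matrix.one_apply]
  · simp [Matrix.one_apply]

lemma good_mul {n : ℕ} {M N : Matrix (Fin n) (Fin n) ℝ}
    (hM : GoodM n M) (hN : GoodM n N) : GoodM n (M * N) := by
  obtain ⟨hM0, hMd, hMs⟩ := hM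
  obtain ⟨hN0, hNd, hNs⟩ := hN
  refine ⟨fun i j => ?_, fun i => ?_, fun j => ?_⟩
  · rw [Matrix.mul_apply]
    exact Finset.sum_nonneg fun k _ => mul_nonneg (hM0 i k) (hN0 k j)
  · rw [Matrix.mul_apply]
    refine Finset.sum_pos' (fun k _ => mul_nonneg (hM0 i k) (hN0 k i)) ?_
    exact ⟨i, Finset.mem_univ i, mul_pos (hMd i) (hNd i)⟩
  · simp only [Matrix.mul_apply]
    rw [Finset.sum_comm]
    have : ∀ k, ∑ i, M i k * N k j = N k j := fun k => by
      rw [← Finset.sum_mul, hMs k, one_mul]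
    simp only [this]
    exact hNs j

lemma colsum_mul {n : ℕ} {M N : Matrix (Fin n) (Fin n) ℝ}
    (hMs : ∀ j, ∑ i, M i j = 1) (hNs : ∀ j, ∑ i, N i j = 1) (j : Fin n) :
    ∑ i, (M * N) i j = 1 := by
  simp only [Matrix.mul_apply]
  rw [Finset.sum_comm]
  have : ∀ k, ∑ i, M i k * N k j = N k j := fun k => by
    rw [← Finset.sum_mul, hMs k, one_mul]
  simp only [this]
  exact hNs j

lemma pos_mul_good {n : ℕ} (hn : 0 < n) {M N : Matrix (Fin n) (Fin n) ℝ}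
    (hM : PosM n M) (hN : GoodM n N) : PosM n (M * N) := by
  obtain ⟨hMp, hMs⟩ := hM
  obtain ⟨hN0, hNd, hNs⟩ := hN
  refine ⟨fun i j => ?_, colsum_mul hMs hNs⟩
  rw [Matrix.mul_apply]
  refine Finset.sum_pos' (fun k _ => mul_nonneg (hMp i k).le (hN0 k j)) ?_
  exact ⟨j, Finset.mem_univ j, mul_pos (hMp i j) (hNd j)⟩

lemma good_mul_pos {n : ℕ} (hn : 0 < n) {M N : Matrix (Fin n) (Fin n) ℝ}
    (hM : GoodM n M) (hN : PosM n N) : PosM n (M * N) := by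
  obtain ⟨hM0, hMd, hMs⟩ := hM
  obtain ⟨hNp, hNs⟩ := hN
  refine ⟨fun i j => ?_, colsum_mul hMs hNs⟩
  rw [Matrix.mul_apply]
  refine Finset.sum_pos' (fun k _ => mul_nonneg (hM0 i k) (hNp k j).le) ?_
  exact ⟨i, Finset.mem_univ i, mul_pos (hMd i) (hNp i j)⟩

lemma good_aimd {n : ℕ} (hn : 0 < n) {β : ℝ} (hβ0 : 0 < β) (hβ1 : β < 1)
    {A : Matrix (Fin n) (Fin n) ℝ} (hA : IsAIMD n β A) : GoodM n A := by
  obtain ⟨b, hb, rfl⟩ := hA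
  have hn' : (0:ℝ) < (n:ℝ) := by exact_mod_cast hn
  have hb0 : ∀ i, 0 < b i := fun i => by rcases hb i with h | h <;> simp [h] <;> linarith
  have hb1 : ∀ i, b i ≤ 1 := fun i => by rcases hb i with h | h <;> simp [h] <;> linarith
  have hent : ∀ i j, (Matrix.diagonal b
      + (1/(n:ℝ)) • (Matrix.of (fun _ j => 1 - b j) : Matrix (Fin n) (Fin n) ℝ)) i j
      = Matrix.diagonal b i j + 1/(n:ℝ) * (1 - b j) := fun i j => by
    simp [Matrix.add_apply, Matrix.smul_apply, smul_eq_mul]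
  have hnn : ∀ j, 0 ≤ 1/(n:ℝ) * (1 - b j) := fun j =>
    mul_nonneg (by positivity) (by have := hb1 j; linarith)
  refine ⟨fun i j => ?_, fun i => ?_, fun j => ?_⟩
  · rw [hent]
    by_cases h : i = j
    · subst h; rw [Matrix.diagonal_apply_eq]
      have := hb0 i; have := hnn i; linarith
    · rw [Matrix.diagonal_apply_ne _ h]
      have := hnn j; linarith
  · rw [hent, Matrix.diagonal_apply_eq]
    have := hb0 i; have := hnn i; linarith
  · simp only [hent]
    rw [Finset.sum_add_distrib]
    have hdg : ∑ i : Fin n, Matrix.diagonal b i j = b j := by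
      simp [Matrix.diagonal_apply]
    rw [hdg, Finset.sum_const, Finset.card_univ, Fintype.card_fin, nsmul_eq_mul]
    field_simp
    ring

lemma pos_B {n : ℕ} (hn : 0 < n) {β : ℝ} (hβ0 : 0 < β) (hβ1 : β < 1) :
    PosM n (Bmat n β) := by
  have hn' : (0:ℝ) < (n:ℝ) := by exact_mod_cast hn
  have hc : 0 < (1 - β) / (n:ℝ) := div_pos (by linarith) hn'
  have hent : ∀ i j : Fin n, Bmat n β i j
      = β * (1 : Matrix (Fin n) (Fin n) ℝ) i j + (1 - β) / (n:ℝ) := fun i j => by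
    simp [Bmat, Matrix.add_apply, Matrix.smul_apply, smul_eq_mul]
  constructor
  · intro i j
    rw [hent, Matrix.one_apply]
    by_cases h : i = j <;> simp [h] <;> nlinarith
  · intro j
    simp only [hent]
    rw [Finset.sum_add_distrib]
    have h1 : ∑ i : Fin n, (1 : Matrix (Fin n) (Fin n) ℝ) i j = 1 := by
      simp [Matrix.one_apply]
    rw [← Finset.mul_sum, h1, Finset.sum_const, Finset.card_univ, Fintype.card_fin,
      nsmul_eq_mul, mul_one]
    field_simp
    ring

lemma good_prod {n : ℕ} (L : List (Matrix (Fin n) (Fin n) ℝ))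
    (hG : ∀ M ∈ L, GoodM n M) : GoodM n L.prod := by
  induction L with
  | nil => simpa using good_one n
  | cons A T ih =>
    rw [List.prod_cons]
    exact good_mul (hG A (by simp)) (ih fun M hM => hG M (by simp [hM]))

lemma pos_prod {n : ℕ} (hn : 0 < n) (L : List (Matrix (Fin n) (Fin n) ℝ))
    (hG : ∀ M ∈ L, GoodM n M) (hP : ∃ M ∈ L, PosM n M) : PosM n L.prod := by
  induction L with
  | nil => simp at hP
  | cons A T ih =>
    rw [List.prod_cons]
    obtain ⟨M, hM, hMP⟩ := hP
    rcases List.mem_cons.mp hM with rfl | hMT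
    · exact pos_mul_good hn hMP (good_prod T fun N hN => hG N (by simp [hN]))
    · exact good_mul_pos hn (hG A (by simp))
        (ih (fun N hN => hG N (by simp [hN])) ⟨M, hMT, hMP⟩)

/-- A product `X_ℓ ⋯ X₂ X₁` of AIMD matrices, at least one of which is the full back-off
matrix `B`, is a column stochastic matrix with all entries strictly positive. -/
theorem prod_aimd_with_backoff_pos_colStochastic
    (n : ℕ) (hn : 0 < n) (β : ℝ) (hβ0 : 0 < β) (hβ1 : β < 1)
    (l : ℕ) (hl : 0 < l) (X : Fin l → Matrix (Fin n) (Fin n) ℝ)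
    (hX : ∀ g, IsAIMD n β (X g))
    (hB : ∃ g, X g = Bmat n β) :
    (∀ i j, 0 < (List.ofFn X).reverse.prod i j) ∧
    (∀ j, ∑ i, (List.ofFn X).reverse.prod i j = 1) := by
  obtain ⟨g, hg⟩ := hB
  have hG : ∀ M ∈ (List.ofFn X).reverse, GoodM n M := by
    intro M hM
    rw [List.mem_reverse, List.mem_ofFn] at hM
    obtain ⟨k, rfl⟩ := hM
    exact good_aimd hn hβ0 hβ1 (hX k)
  have hP : ∃ M ∈ (List.ofFn X).reverse, PosM n M := by
    refine ⟨Bmat n β, ?_, pos_B hn hβ0 hβ1⟩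
    rw [List.mem_reverse, List.mem_ofFn]
    exact ⟨g, hg⟩
  obtain ⟨h1, h2⟩ := pos_prod hn _ hG hP
  exact ⟨h1, h2⟩
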